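/- The field ℚ(cot(π/5)) is a Galois extension of ℚ of degree 4 whose Galois group is cyclic (of order 4). -/

import Mathlib

open Polynomial IntermediateField

noncomputable section
lemma cot_key : 5 * (Real.cot (Real.pi/5))^4 - 10 * (Real.cot (Real.pi/5))^2 + 1 = 0 := by
  have hpi := Real.pi_pos
  have hs : Real.sin (Real.pi/5) ≠ 0 :=
    (Real.sin_pos_of_pos_of_lt_pi (by linarith) (by linarith)).ne'
  have hc5 : Real.cos (Real.pi/5) = (1 + Real.sqrt 5)/4 := Real.cos_pi_div_five
  have hsq : Real.sin (Real.pi/5)^2 = 1 - Real.cos (Real.pi/5)^2 := by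
    have := Real.sin_sq_add_cos_sq (Real.pi/5); linarith
  have h5 : Real.sqrt 5 ^ 2 = 5 := Real.sq_sqrt (by norm_num)
  have key0 : 5 * Real.cos (Real.pi/5)^4 - 10 * Real.cos (Real.pi/5)^2 * Real.sin (Real.pi/5)^2
      + Real.sin (Real.pi/5)^4 = 0 := by
    rw [show Real.sin (Real.pi/5)^4 = (Real.sin (Real.pi/5)^2)^2 by ring, hsq, hc5]
    linear_combination ((-1/16 : ℝ) + (1/4)*Real.sqrt 5 + (1/16)*(Real.sqrt 5)^2) * h5
  rw [Real.cot_eq_cos_div_sin, div_pow, div_pow]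
  rw [show 5 * (Real.cos (Real.pi/5)^4 / Real.sin (Real.pi/5)^4)
      - 10 * (Real.cos (Real.pi/5)^2 / Real.sin (Real.pi/5)^2) + 1
      = (5 * Real.cos (Real.pi/5)^4 - 10 * Real.cos (Real.pi/5)^2 * Real.sin (Real.pi/5)^2
      + Real.sin (Real.pi/5)^4) / Real.sin (Real.pi/5)^4 by field_simp, key0, zero_div]
lemma rZ_monic : (X^4 - C 10 * X^2 + C 5 : ℤ[X]).Monic := by monicity!

lemma rZ_natDegree : (X^4 - C 10 * X^2 + C 5 : ℤ[X]).natDegree = 4 := by compute_degree!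

lemma rZ_irred : Irreducible (X^4 - C 10 * X^2 + C 5 : ℤ[X]) := by
  have hE : (X^4 - C 10 * X^2 + C 5 : ℤ[X]).IsEisensteinAt (Ideal.span {5}) := by
    constructor
    · rw [rZ_monic.leadingCoeff, Ideal.mem_span_singleton]
      norm_num
    · intro n hn
      rw [rZ_natDegree] at hn
      interval_cases n <;>
        simp [coeff_X_pow, Ideal.mem_span_singleton, coeff_C] <;> norm_num
    · rw [Ideal.span_singleton_pow, Ideal.mem_span_singleton]
      simp [coeff_X_pow, coeff_C]
  exact hE.irreducible (Ideal.span_singleton_prime (by norm_num) |>.mpr (by norm_num))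
    rZ_monic.isPrimitive (by rw [rZ_natDegree]; norm_num)

lemma rQ_irred : Irreducible (X^4 - C 10 * X^2 + C 5 : ℚ[X]) := by
  have h := (rZ_monic.irreducible_iff_irreducible_map_fraction_map (K := ℚ)).mp rZ_irred
  have hmap : (X^4 - C 10 * X^2 + C 5 : ℤ[X]).map (algebraMap ℤ ℚ)
      = (X^4 - C 10 * X^2 + C 5 : ℚ[X]) := by
    simp only [Polynomial.map_add, Polynomial.map_sub, Polynomial.map_mul,
      Polynomial.map_pow, map_X, map_C]
    norm_num
  rwa [hmap] at h
set_option synthInstance.maxHeartbeats 400000 in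
set_option maxHeartbeats 2000000 in
lemma general (x : ℝ) (hkey : 5 * x^4 - 10 * x^2 + 1 = 0) :
    IsGalois ℚ ℚ⟮x⟯ ∧ Module.finrank ℚ ℚ⟮x⟯ = 4 ∧ IsCyclic (ℚ⟮x⟯ ≃ₐ[ℚ] ℚ⟮x⟯) := by
  have hx0 : x ≠ 0 := by
    intro h; rw [h] at hkey; norm_num at hkey
  have hx1 : x^2 ≠ 1 := by
    intro h
    rw [show x^4 = (x^2)^2 by ring, h] at hkey; norm_num at hkey
  -- t = x⁻¹ has minimal polynomial X^4 - 10X^2 + 5 (Eisenstein at 5)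
  have htkey : (x⁻¹)^4 - 10 * (x⁻¹)^2 + 5 = 0 := by
    field_simp
    linear_combination hkey
  have hti : IsIntegral ℚ (x⁻¹) := by
    refine ⟨X^4 - C 10 * X^2 + C 5, by monicity!, ?_⟩
    simp only [eval₂_add, eval₂_sub, eval₂_mul, eval₂_pow, eval₂_X, eval₂_C, map_ofNat, Polynomial.eval₂_ofNat]
    linear_combination htkey
  have hmint : minpoly ℚ (x⁻¹) = X^4 - C 10 * X^2 + C 5 := by
    refine (minpoly.eq_of_irreducible_of_monic rQ_irred ?_ (by monicity!)).symm
    simp only [map_add, map_sub, map_mul, map_pow, aeval_X, aeval_C, map_ofNat]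
    linear_combination htkey
  have hfrt : Module.finrank ℚ ℚ⟮x⁻¹⟯ = 4 := by
    rw [adjoin.finrank hti, hmint]
    compute_degree!
  have hct : ℚ⟮x⟯ = ℚ⟮x⁻¹⟯ := by
    apply le_antisymm
    · rw [adjoin_simple_le_iff]
      have := inv_mem (mem_adjoin_simple_self ℚ (x⁻¹))
      rwa [inv_inv] at this
    · rw [adjoin_simple_le_iff]
      exact inv_mem (mem_adjoin_simple_self ℚ x)
  have hfr : Module.finrank ℚ ℚ⟮x⟯ = 4 := by rw [hct]; exact hfrt
  -- the minimal polynomial of x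
  set q : ℚ[X] := X^4 - C 2 * X^2 + C (1/5) with hqdef
  have hq_monic : q.Monic := by rw [hqdef]; monicity!
  have hq_deg : q.natDegree = 4 := by rw [hqdef]; compute_degree!
  have haevalx : (aeval x) q = 0 := by
    rw [hqdef]
    simp only [map_add, map_sub, map_mul, map_pow, aeval_X, aeval_C, map_ofNat]
    have h15 : (algebraMap ℚ ℝ) (1/5) = 1/5 := by
      rw [map_div₀, map_one, map_ofNat]
    rw [h15]
    linear_combination (1/5 : ℝ) * hkey
  have hxi : IsIntegral ℚ x := ⟨q, hq_monic, by rwa [← aeval_def]⟩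
  haveI hfd : FiniteDimensional ℚ ℚ⟮x⟯ := adjoin.finiteDimensional hxi
  have hminx : minpoly ℚ x = q := by
    refine (eq_of_monic_of_dvd_of_natDegree_le (minpoly.monic hxi) hq_monic
      (minpoly.dvd ℚ x haevalx) ?_).symm
    rw [hq_deg, ← adjoin.finrank hxi, hfr]
  -- the generator and the other root
  set a : ℚ⟮x⟯ := AdjoinSimple.gen ℚ x with hadef
  have haR : (a : ℝ) = x := rfl
  have haE : 5 * a^4 - 10 * a^2 + 1 = 0 := by
    have h0 : ((5 * a^4 - 10 * a^2 + 1 : ℚ⟮x⟯) : ℝ) = 0 := by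
      push_cast [haR]
      exact hkey
    exact_mod_cast h0
  have ha0 : a ≠ 0 := by
    intro h
    apply hx0
    rw [← haR, h]; rfl
  have ha1 : a^2 ≠ 1 := by
    intro h
    apply hx1
    have : ((a^2 : ℚ⟮x⟯) : ℝ) = ((1 : ℚ⟮x⟯) : ℝ) := by rw [h]
    push_cast [haR] at this
    exact this
  set b : ℚ⟮x⟯ := (a^2 - 1)/(2*a) with hbdef
  have h2a : (2 : ℚ⟮x⟯) * a ≠ 0 := mul_ne_zero two_ne_zero ha0
  have hb0 : b ≠ 0 := div_ne_zero (sub_ne_zero.mpr ha1) h2a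
  have hsum : a^2 + b^2 = 2 := by
    rw [hbdef]
    field_simp
    linear_combination haE
  have hprod : a^2 * b^2 = 1/5 := by
    rw [hbdef]
    field_simp
    linear_combination haE
  -- q splits in ℚ⟮x⟯
  have halg15 : algebraMap ℚ ℚ⟮x⟯ (1/5) = 1/5 := by
    rw [map_div₀, map_one, map_ofNat]
  have halg2 : algebraMap ℚ ℚ⟮x⟯ 2 = 2 := map_ofNat _ 2
  have hfactor : q.map (algebraMap ℚ ℚ⟮x⟯)
      = (X - C a) * (X - C (-a)) * ((X - C b) * (X - C (-b))) := by
    have expand : (X - C a) * (X - C (-a)) * ((X - C b) * (X - C (-b)))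
        = X^4 - C (a^2 + b^2) * X^2 + C (a^2 * b^2) := by
      simp only [C_add, C_mul, C_pow, C_neg]
      ring
    rw [expand, hsum, hprod, hqdef]
    simp only [Polynomial.map_add, Polynomial.map_sub, Polynomial.map_mul,
      Polynomial.map_pow, Polynomial.map_X, Polynomial.map_C, halg15, halg2]
  have hsplits : (q.map (algebraMap ℚ ℚ⟮x⟯)).Splits := by
    rw [hfactor]
    exact ((Splits.X_sub_C _).mul (Splits.X_sub_C _)).mul
      ((Splits.X_sub_C _).mul (Splits.X_sub_C _))
  -- real versions of the root identities
  have h2x : (2:ℝ) * x ≠ 0 := mul_ne_zero two_ne_zero hx0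
  have hsumR : x^2 + ((x^2-1)/(2*x))^2 = 2 := by
    field_simp
    linear_combination hkey
  have hprodR : x^2 * ((x^2-1)/(2*x))^2 = 1/5 := by
    field_simp
    linear_combination hkey
  -- ℚ⟮x⟯ is the splitting field of q inside ℝ
  have hx'mem : (x^2-1)/(2*x) ∈ ℚ⟮x⟯ := by
    apply div_mem
    · exact sub_mem (pow_mem (mem_adjoin_simple_self ℚ x) 2) (one_mem _)
    · refine mul_mem ?_ (mem_adjoin_simple_self ℚ x)
      rw [show (2:ℝ) = 1 + 1 by norm_num]
      exact add_mem (one_mem _) (one_mem _)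
  have hroots : ℚ⟮x⟯ = adjoin ℚ (q.rootSet ℝ) := by
    apply le_antisymm
    · rw [adjoin_simple_le_iff]
      refine subset_adjoin ℚ _ ?_
      rw [mem_rootSet]
      exact ⟨hq_monic.ne_zero, haevalx⟩
    · rw [adjoin_le_iff]
      intro y hy
      rw [mem_rootSet] at hy
      have hy0 : y^4 - 2*y^2 + 1/5 = 0 := by
        have := hy.2
        rw [hqdef] at this
        simp only [map_add, map_sub, map_mul, map_pow, aeval_X, aeval_C, map_ofNat] at this
        rw [show (algebraMap ℚ ℝ) (1/5) = 1/5 by rw [map_div₀, map_one, map_ofNat]] at this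
        linear_combination this
      have hzero : (y - x) * (y + x) * ((y - (x^2-1)/(2*x)) * (y + (x^2-1)/(2*x))) = 0 := by
        linear_combination hy0 - y^2 * hsumR + hprodR
      rcases mul_eq_zero.mp hzero with h | h
      · rcases mul_eq_zero.mp h with h' | h'
        · have : y = x := by linarith [sub_eq_zero.mp h']
          rw [this]; exact mem_adjoin_simple_self ℚ x
        · have : y = -x := by linarith [eq_neg_of_add_eq_zero_left h']
          rw [this]; exact neg_mem (mem_adjoin_simple_self ℚ x)
      · rcases mul_eq_zero.mp h with h' | h'
        · have : y = (x^2-1)/(2*x) := by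
            have := sub_eq_zero.mp h'; linarith
          rw [this]; exact hx'mem
        · have : y = -((x^2-1)/(2*x)) := eq_neg_of_add_eq_zero_left h'
          rw [this]; exact neg_mem hx'mem
  haveI hsf : q.IsSplittingField ℚ ℚ⟮x⟯ :=
    IntermediateField.isSplittingField_iff.mpr ⟨hsplits, hroots⟩
  haveI hnormal : Normal ℚ ℚ⟮x⟯ := Normal.of_isSplittingField q
  haveI hgal : IsGalois ℚ ℚ⟮x⟯ := {}
  -- the automorphism sending a to b
  have hbroot : (aeval b) (minpoly ℚ (adjoin.powerBasis hxi).gen) = 0 := by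
    rw [adjoin.powerBasis_gen]; erw [IntermediateField.minpoly_gen]; rw [hminx, hqdef]
    simp only [map_add, map_sub, map_mul, map_pow, aeval_X, aeval_C, map_ofNat, halg15, halg2]
    linear_combination b^2 * hsum - hprod
  set f := (adjoin.powerBasis hxi).lift b hbroot with hfdef
  haveI : Algebra.IsAlgebraic ℚ ℚ⟮x⟯ := Algebra.IsAlgebraic.of_finite ℚ _
  set σ : ℚ⟮x⟯ ≃ₐ[ℚ] ℚ⟮x⟯ := AlgEquiv.ofBijective f (Algebra.IsAlgebraic.algHom_bijective f)
    with hσdef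
  have hσa : σ a = b := by
    show f a = b
    have := (adjoin.powerBasis hxi).lift_gen b hbroot
    rwa [adjoin.powerBasis_gen] at this
  have hba : b^2 - 1 + 2*a*b = 0 := by
    rw [hbdef]
    field_simp
    linear_combination haE
  have hσb : σ b = -a := by
    have hσbeq : σ b = (b^2 - 1)/(2*b) := by
      rw [hbdef, map_div₀, map_sub, map_mul, map_pow, map_one, map_ofNat, hσa]
    rw [hσbeq, div_eq_iff (mul_ne_zero two_ne_zero hb0)]
    linear_combination hba
  have hσσa : σ (σ a) = -a := by rw [hσa, hσb]
  have hσ2ne : σ^2 ≠ 1 := by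
    intro h
    have h1 : (σ^2) a = a := by rw [h]; rfl
    rw [pow_two, AlgEquiv.mul_apply, hσσa] at h1
    have hcoe : ((-a : ℚ⟮x⟯) : ℝ) = ((a : ℚ⟮x⟯) : ℝ) := by rw [h1]
    push_cast [haR] at hcoe
    exact hx0 (by linarith)
  have hcard : Nat.card (ℚ⟮x⟯ ≃ₐ[ℚ] ℚ⟮x⟯) = 4 := by
    rw [IsGalois.card_aut_eq_finrank, hfr]
  have hdvd : orderOf σ ∣ 4 := by rw [← hcard]; exact orderOf_dvd_natCard σ
  have hpos : 0 < orderOf σ := orderOf_pos σ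
  have hle : orderOf σ ≤ 4 := Nat.le_of_dvd (by norm_num) hdvd
  have horder : orderOf σ = 4 := by
    interval_cases hh : orderOf σ
    · have h1 : σ = 1 := orderOf_eq_one_iff.mp hh
      exact absurd (by rw [h1, one_pow]) hσ2ne
    · exact absurd (hh ▸ pow_orderOf_eq_one σ) hσ2ne
    · exact absurd hdvd (by norm_num)
    · rfl
  exact ⟨hgal, hfr, isCyclic_of_orderOf_eq_card σ (by rw [horder, hcard])⟩

end

/-- `ℚ(cot (π / 5))` is a Galois extension of `ℚ` of degree `4` with cyclic
Galois group. -/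
theorem adjoin_cot_pi_div_five_cyclic_degree_four :
    letI E : IntermediateField ℚ ℝ :=
      IntermediateField.adjoin ℚ {Real.cot (Real.pi / 5)}
    IsGalois ℚ E ∧ Module.finrank ℚ E = 4 ∧ IsCyclic (E ≃ₐ[ℚ] E) := by
  exact general _ cot_key
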